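/- Sensibility of relational graph models: if a λ-term M is unsolvable (equivalently, has no head normal form) then its interpretation in any relational graph model is empty: no judgment Γ ⊢_D M : α is derivable. -/

import Mathlib

/-- Untyped λ⊥-terms in de Bruijn notation, intrinsically scoped:
`Tm n` is the set of λ⊥-terms with free variables among `x₀,…,x_{n-1}`. -/
inductive Tm : ℕ → Type
  | var : ∀ {n : ℕ}, Fin n → Tm n
  | lam : ∀ {n : ℕ}, Tm (n + 1) → Tm n
  | app : ∀ {n : ℕ}, Tm n → Tm n → Tm n
  | bot : ∀ {n : ℕ}, Tm n

/-- Renaming of free variables. -/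
def Tm.rename : ∀ {n m : ℕ}, (Fin n → Fin m) → Tm n → Tm m
  | _, _, f, .var k => .var (f k)
  | _, m, f, .lam t =>
      .lam (t.rename fun k => Fin.cases (motive := fun _ => Fin (m + 1)) 0
        (fun j => (f j).succ) k)
  | _, _, f, .app t u => .app (t.rename f) (u.rename f)
  | _, _, _, .bot => .bot

/-- Simultaneous (capture-avoiding) substitution. -/
def Tm.subst : ∀ {n m : ℕ}, (Fin n → Tm m) → Tm n → Tm m
  | _, _, σ, .var k => σ k
  | _, m, σ, .lam t =>
      .lam (t.subst fun k => Fin.cases (motive := fun _ => Tm (m + 1)) (.var 0)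
        (fun j => (σ j).rename Fin.succ) k)
  | _, _, σ, .app t u => .app (t.subst σ) (u.subst σ)
  | _, _, _, .bot => .bot

/-- Substitution `M{N/y}` of `N` for the 0-th free variable of `M`. -/
def Tm.subst1 {n : ℕ} (M : Tm (n + 1)) (N : Tm n) : Tm n :=
  M.subst (Fin.cases (motive := fun _ => Tm n) N Tm.var)

/-- One-step β-reduction (contextual closure of `(λx.M)N → M{N/x}`). -/
inductive Beta : ∀ {n : ℕ}, Tm n → Tm n → Prop
  | redex {n} (M : Tm (n + 1)) (N : Tm n) : Beta (.app (.lam M) N) (M.subst1 N)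
  | appL {n} {M M' N : Tm n} : Beta M M' → Beta (.app M N) (.app M' N)
  | appR {n} {M N N' : Tm n} : Beta N N' → Beta (.app M N) (.app M N')
  | lam {n} {M M' : Tm (n + 1)} : Beta M M' → Beta (.lam M) (.lam M')

/-- A λ⊥-term is a λ-term when it contains no occurrence of `⊥`. -/
def BotFree : ∀ {n : ℕ}, Tm n → Prop
  | _, .var _ => True
  | _, .lam M => BotFree M
  | _, .app M N => BotFree M ∧ BotFree N
  | _, .bot => False

/-- The environment assigning the multiset `[α]` to the variable `k` and `0` elsewhere. -/
def single {D : Type} {n : ℕ} (k : Fin n) (α : D) : Fin n → Multiset D :=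
  fun j => if j = k then {α} else 0

/-- The relational interpretation `⟦M⟧_{x̄} ⊆ M_f(D)ⁿ × D` of a λ⊥-term in a relational
graph model `(D, i)`. -/
def Interp {D : Type} (i : Multiset D × D → D) :
    ∀ {n : ℕ}, Tm n → Set ((Fin n → Multiset D) × D)
  | _, .var k => {p | ∃ α, p = (single k α, α)}
  | _, .lam M => {p | ∃ Γ a α, (Fin.cons a Γ, α) ∈ Interp i M ∧ p = (Γ, i (a, α))}
  | n, .app M N =>
      {p | ∃ (Γ₀ : Fin n → Multiset D) (l : List ((Fin n → Multiset D) × D)),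
        (Γ₀, i (↑(l.map Prod.snd), p.2)) ∈ Interp i M ∧
        (∀ q ∈ l, q ∈ Interp i N) ∧ p.1 = Γ₀ + (l.map Prod.fst).sum}
  | _, .bot => ∅

/-- The non-idempotent intersection type system associated with a relational graph model
`(D, i)`: `Der i Γ M α m` states that the judgment `Γ ⊢ M : α` is derivable by a
derivation `π` with `#app(π) = m` occurrences of the application rule. -/
inductive Der {D : Type} (i : Multiset D × D → D) :
    ∀ {n : ℕ}, (Fin n → Multiset D) → Tm n → D → ℕ → Prop
  | var {n} (k : Fin n) (α : D) : Der i (single k α) (.var k) α 0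
  | lam {n} {Γ : Fin n → Multiset D} {a : Multiset D} {M : Tm (n + 1)} {α : D} {m : ℕ} :
      Der i (Fin.cons a Γ) M α m → Der i Γ (.lam M) (i (a, α)) m
  | app {n} {Γ : Fin n → Multiset D} {M N : Tm n} {α : D} {m : ℕ}
      (l : List ((Fin n → Multiset D) × D × ℕ)) :
      Der i Γ M (i (↑(l.map fun q => q.2.1), α)) m →
      (∀ q ∈ l, Der i q.1 N q.2.1 q.2.2) →
      Der i (Γ + (l.map fun q => q.1).sum) (.app M N) α
        (m + (l.map fun q => q.2.2).sum + 1)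

/-- `IsHead M`: `M` is an application spine headed by a variable. -/
inductive IsHead : ∀ {n : ℕ}, Tm n → Prop
  | var {n} (k : Fin n) : IsHead (.var k)
  | app {n} {M N : Tm n} : IsHead M → IsHead (.app M N)

/-- `IsHnf M`: `M` is a head normal form `λx₁…x_n. x_i M₁ ⋯ M_k`. -/
inductive IsHnf : ∀ {n : ℕ}, Tm n → Prop
  | head {n} {M : Tm n} : IsHead M → IsHnf M
  | lam {n} {M : Tm (n + 1)} : IsHnf M → IsHnf (.lam M)


section Aux
variable {D : Type}

/-- Pointwise evaluation of a sum of functions. -/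
lemma msum_apply {ι : Type*} {M : Type*} [AddCommMonoid M] (s : Multiset (ι → M)) (j : ι) :
    s.sum j = (s.map (fun f => f j)).sum := by
  induction s using Multiset.induction_on with
  | empty => simp
  | cons f s ih => simp [ih]

/-- Splitting a multiset along a decomposition of its image. -/
lemma map_split {γ β : Type*} (f : γ → β) :
    ∀ (a : Multiset β) (b : Multiset β) (t : Multiset γ), t.map f = a + b →
      ∃ t₁ t₂, t = t₁ + t₂ ∧ t₁.map f = a ∧ t₂.map f = b := by
  intro a
  induction a using Multiset.induction_on with
  | empty => intro b t h; exact ⟨0, t, by simp, by simp, by simpa using h⟩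
  | cons x a ih =>
      intro b t h
      have hx : x ∈ t.map f := by rw [h]; simp
      obtain ⟨y, hy, hyx⟩ := Multiset.mem_map.mp hx
      obtain ⟨t', rfl⟩ := Multiset.exists_cons_of_mem hy
      have h' : t'.map f = a + b := by
        have hh : x ::ₘ t'.map f = x ::ₘ (a + b) := by
          rw [Multiset.map_cons, hyx, Multiset.cons_add] at h
          simpa using h
        exact (Multiset.cons_inj_right x).mp hh
      obtain ⟨t₁, t₂, rfl, h1, h2⟩ := ih b t' h'
      exact ⟨y ::ₘ t₁, t₂, by simp [Multiset.cons_add], by simp [h1, hyx], h2⟩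

/-- Transport of a context along an (injective) renaming. -/
def pushCtx {n m : ℕ} (ρ : Fin n → Fin m) (Γ : Fin n → Multiset D) : Fin m → Multiset D :=
  fun j => ∑ k, if ρ k = j then Γ k else 0

lemma pushCtx_single {n m : ℕ} (ρ : Fin n → Fin m) (hρ : Function.Injective ρ)
    (k : Fin n) (α : D) : pushCtx ρ (single k α) = single (ρ k) α := by
  funext j
  unfold pushCtx single
  rw [Finset.sum_eq_single k]
  · simp [eq_comm]
  · intro k' _ hk'
    simp [hk']
  · simp

lemma pushCtx_add {n m : ℕ} (ρ : Fin n → Fin m) (Γ Δ : Fin n → Multiset D) :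
    pushCtx ρ (Γ + Δ) = pushCtx ρ Γ + pushCtx ρ Δ := by
  funext j
  simp only [pushCtx, Pi.add_apply]
  rw [← Finset.sum_add_distrib]
  apply Finset.sum_congr rfl
  intro k _
  split <;> simp

lemma pushCtx_zero {n m : ℕ} (ρ : Fin n → Fin m) : pushCtx ρ (0 : Fin n → Multiset D) = 0 := by
  funext j; simp [pushCtx]

lemma pushCtx_listSum {n m : ℕ} (ρ : Fin n → Fin m) (L : List (Fin n → Multiset D)) :
    pushCtx ρ L.sum = (L.map (pushCtx ρ)).sum := by
  induction L with
  | nil => simpa using pushCtx_zero ρ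
  | cons x L ih => simp [pushCtx_add, ih]

/-- The lifting of a renaming, as used in `Tm.rename` on a `lam`. -/
lemma lift_injective {n m : ℕ} {ρ : Fin n → Fin m} (hρ : Function.Injective ρ) :
    Function.Injective (fun k => Fin.cases (motive := fun _ => Fin (m + 1)) 0
      (fun j => (ρ j).succ) k) := by
  intro a b h
  dsimp only at h
  induction a using Fin.cases with
  | zero =>
      induction b using Fin.cases with
      | zero => rfl
      | succ b =>
          rw [Fin.cases_zero, Fin.cases_succ] at h
          exact absurd h.symm (Fin.succ_ne_zero _)
  | succ a =>
      induction b using Fin.cases with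
      | zero => rw [Fin.cases_succ, Fin.cases_zero] at h; exact absurd h (Fin.succ_ne_zero _)
      | succ b =>
          rw [Fin.cases_succ, Fin.cases_succ, Fin.succ_inj] at h
          exact congrArg Fin.succ (hρ h)

lemma pushCtx_lift {n m : ℕ} (ρ : Fin n → Fin m) (a : Multiset D) (Γ : Fin n → Multiset D) :
    pushCtx (fun k => Fin.cases (motive := fun _ => Fin (m + 1)) 0
      (fun j => (ρ j).succ) k) (Fin.cons a Γ) = Fin.cons a (pushCtx ρ Γ) := by
  funext j
  simp only [pushCtx]
  rw [Fin.sum_univ_succ]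
  induction j using Fin.cases with
  | zero =>
      simp only [Fin.cases_zero, Fin.cases_succ, Fin.cons_zero, if_pos rfl, Fin.cons_succ]
      have h0 : ∀ k : Fin n, (if ((ρ k).succ = (0 : Fin (m+1))) then Γ k else 0) = 0 := by
        intro k; rw [if_neg (Fin.succ_ne_zero _)]
      rw [Finset.sum_congr rfl (fun k _ => h0 k)]
      simp
  | succ j =>
      simp only [Fin.cases_zero, Fin.cases_succ, Fin.cons_succ]
      split_ifs with hc
      · exact absurd hc (Ne.symm (Fin.succ_ne_zero _))
      refine (congrArg (fun x => x + _) (if_neg hc)).trans ((zero_add _).trans ?_)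
      apply Finset.sum_congr rfl
      intro k _
      simp [Fin.succ_inj]

/-- Renaming lemma: derivations are stable under injective renamings. -/
lemma Der.rename {i : Multiset D × D → D} :
    ∀ {n : ℕ} {Γ : Fin n → Multiset D} {M : Tm n} {α : D} {p : ℕ},
      Der i Γ M α p → ∀ {m : ℕ} (ρ : Fin n → Fin m), Function.Injective ρ →
      Der i (pushCtx ρ Γ) (M.rename ρ) α p := by
  intro n Γ M α p h
  induction h with
  | var k α =>
      intro m ρ hρ
      rw [pushCtx_single ρ hρ]
      exact Der.var (ρ k) α
  | lam h ih =>
      intro m ρ hρ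
      have := ih _ (lift_injective hρ)
      rw [pushCtx_lift] at this
      exact Der.lam this
  | app l hM hN ihM ihN =>
      intro m ρ hρ
      have hMd := ihM ρ hρ
      have happ := Der.app (i := i) (l.map fun q => (pushCtx ρ q.1, q.2.1, q.2.2))
        (by simpa [List.map_map, Function.comp_def] using hMd)
        (by
          intro q hq
          simp only [List.mem_map] at hq
          obtain ⟨q', hq', rfl⟩ := hq
          exact ihN q' hq' ρ hρ)
      simp only [List.map_map, Function.comp_def] at happ
      rw [pushCtx_add, pushCtx_listSum, List.map_map]
      convert happ using 2 <;> rfl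

end Aux

section Subst
variable {D : Type}

lemma pushCtx_succ {n : ℕ} (Δ : Fin n → Multiset D) :
    pushCtx Fin.succ Δ = Fin.cons 0 Δ := by
  funext j
  simp only [pushCtx]
  induction j using Fin.cases with
  | zero =>
      rw [Finset.sum_congr rfl (fun k _ => if_neg (Fin.succ_ne_zero k))]
      simp
  | succ j =>
      rw [Finset.sum_eq_single j]
      · simp
      · intro k _ hk; rw [if_neg (by simpa [Fin.succ_inj] using hk)]
      · simp

/-- Total context of a substitution family. -/
def famCtx {n n' : ℕ} (F : Fin n → Multiset ((Fin n' → Multiset D) × D × ℕ)) :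
    Fin n' → Multiset D :=
  ∑ k, ((F k).map Prod.fst).sum

/-- Total measure of a substitution family. -/
def famM {n n' : ℕ} (F : Fin n → Multiset ((Fin n' → Multiset D) × D × ℕ)) : ℕ :=
  ∑ k, ((F k).map fun q => q.2.2).sum

lemma famCtx_apply {n n' : ℕ} (F : Fin n → Multiset ((Fin n' → Multiset D) × D × ℕ))
    (j : Fin n') : famCtx F j = ∑ k, ((F k).map fun q => q.1 j).sum := by
  simp only [famCtx, Finset.sum_apply]
  apply Finset.sum_congr rfl
  intro k _
  rw [msum_apply, Multiset.map_map]
  rfl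

lemma famCtx_split {n n' : ℕ} {F G H : Fin n → Multiset ((Fin n' → Multiset D) × D × ℕ)}
    (h : ∀ k, F k = G k + H k) : famCtx F = famCtx G + famCtx H := by
  simp only [famCtx]
  rw [← Finset.sum_add_distrib]
  apply Finset.sum_congr rfl
  intro k _
  rw [h k, Multiset.map_add, Multiset.sum_add]

lemma famM_split {n n' : ℕ} {F G H : Fin n → Multiset ((Fin n' → Multiset D) × D × ℕ)}
    (h : ∀ k, F k = G k + H k) : famM F = famM G + famM H := by
  simp only [famM]
  rw [← Finset.sum_add_distrib]
  apply Finset.sum_congr rfl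
  intro k _
  rw [h k, Multiset.map_add, Multiset.sum_add]

/-- `GoodFam i σ Γ F` : `F` provides, for each variable `k`, derivations for `σ k`
whose multiset of types is exactly `Γ k`. -/
def GoodFam (i : Multiset D × D → D) {n n' : ℕ} (σ : Fin n → Tm n')
    (Γ : Fin n → Multiset D) (F : Fin n → Multiset ((Fin n' → Multiset D) × D × ℕ)) : Prop :=
  (∀ k, (F k).map (fun q => q.2.1) = Γ k) ∧
    ∀ k, ∀ q ∈ F k, Der i q.1 (σ k) q.2.1 q.2.2

/-- Splitting a good family for a sum context. -/
lemma goodFam_split {i : Multiset D × D → D} {n n' : ℕ} {σ : Fin n → Tm n'}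
    {Γ Δ : Fin n → Multiset D} {F : Fin n → Multiset ((Fin n' → Multiset D) × D × ℕ)}
    (hF : GoodFam i σ (Γ + Δ) F) :
    ∃ G H, (∀ k, F k = G k + H k) ∧ GoodFam i σ Γ G ∧ GoodFam i σ Δ H := by
  have h : ∀ k, ∃ g h, F k = g + h ∧ g.map (fun q => q.2.1) = Γ k ∧
      h.map (fun q => q.2.1) = Δ k :=
    fun k => map_split _ (Γ k) (Δ k) (F k) ((hF.1 k).trans rfl)
  choose G H hsplit hG hH using h
  refine ⟨G, H, hsplit, ⟨hG, ?_⟩, ⟨hH, ?_⟩⟩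
  · intro k q hq
    exact hF.2 k q (by rw [hsplit k]; exact Multiset.mem_add.mpr (Or.inl hq))
  · intro k q hq
    exact hF.2 k q (by rw [hsplit k]; exact Multiset.mem_add.mpr (Or.inr hq))

end Subst

section SubstLemma
variable {D : Type}

lemma famCtx_zero {n n' : ℕ} {H : Fin n → Multiset ((Fin n' → Multiset D) × D × ℕ)}
    (h : ∀ k, H k = 0) : famCtx H = 0 := by
  simp only [famCtx]
  apply Finset.sum_eq_zero
  intro k _
  rw [h k]; simp

lemma famM_zero {n n' : ℕ} {H : Fin n → Multiset ((Fin n' → Multiset D) × D × ℕ)}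
    (h : ∀ k, H k = 0) : famM H = 0 := by
  simp only [famM]
  apply Finset.sum_eq_zero
  intro k _
  rw [h k]; simp

/-- Splitting a good family for the sum of the contexts of a list, and producing
the list of derivations for the substituted argument. -/
lemma listFam {i : Multiset D × D → D} {n n' : ℕ} {σ : Fin n → Tm n'} {N : Tm n} :
    ∀ (l : List ((Fin n → Multiset D) × D × ℕ)),
      (∀ q ∈ l, ∀ (F : Fin n → Multiset ((Fin n' → Multiset D) × D × ℕ)),
        GoodFam i σ q.1 F → Der i (famCtx F) (N.subst σ) q.2.1 (q.2.2 + famM F)) →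
      ∀ H, GoodFam i σ ((l.map Prod.fst).sum) H →
      ∃ l' : List ((Fin n' → Multiset D) × D × ℕ),
        (l'.map fun q => q.2.1) = (l.map fun q => q.2.1) ∧
        (l'.map Prod.fst).sum = famCtx H ∧
        (l'.map fun q => q.2.2).sum = (l.map fun q => q.2.2).sum + famM H ∧
        ∀ q ∈ l', Der i q.1 (N.subst σ) q.2.1 q.2.2 := by
  intro l
  induction l with
  | nil =>
      intro _ H hH
      have hz : ∀ k, H k = 0 := by
        intro k
        have h0 := hH.1 k
        simp only [List.map_nil, List.sum_nil, Pi.zero_apply] at h0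
        exact Multiset.map_eq_zero.mp h0
      exact ⟨[], by simp, by simp [famCtx_zero hz], by simp [famM_zero hz], by simp⟩
  | cons q l ih =>
      intro hder H hH
      have hH' : GoodFam i σ (q.1 + ((l.map Prod.fst).sum)) H := by
        simpa using hH
      obtain ⟨G, H', hsplit, hG, hH'2⟩ := goodFam_split hH'
      have hq := hder q (by simp) G hG
      obtain ⟨l'', h1, h2, h3, h4⟩ := ih (fun r hr => hder r (by simp [hr])) H' hH'2
      refine ⟨(famCtx G, q.2.1, q.2.2 + famM G) :: l'', ?_, ?_, ?_, ?_⟩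
      · simp [h1]
      · simp only [List.map_cons, List.sum_cons, h2, famCtx_split hsplit]
      · simp only [List.map_cons, List.sum_cons, h3, famM_split hsplit]
        omega
      · intro r hr
        rcases List.mem_cons.mp hr with rfl | hr
        · exact hq
        · exact h4 r hr

/-- The substitution lemma for the intersection type system. -/
lemma Der.subst {i : Multiset D × D → D} :
    ∀ {n : ℕ} {Γ : Fin n → Multiset D} {M : Tm n} {α : D} {p : ℕ},
      Der i Γ M α p → ∀ {n' : ℕ} (σ : Fin n → Tm n')
        (F : Fin n → Multiset ((Fin n' → Multiset D) × D × ℕ)),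
        GoodFam i σ Γ F → Der i (famCtx F) (M.subst σ) α (p + famM F) := by
  intro n Γ M α p h
  induction h with
  | var k α =>
      intro n' σ F hF
      have h1 : (F k).map (fun q => q.2.1) = {α} := by
        have := hF.1 k; simpa [single] using this
      have hcard : Multiset.card (F k) = 1 := by
        have := congrArg Multiset.card h1
        simpa using this
      obtain ⟨q, hq⟩ := Multiset.card_eq_one.mp hcard
      have hq21 : q.2.1 = α := by
        rw [hq, Multiset.map_singleton] at h1
        exact Multiset.singleton_inj.mp h1
      have hz : ∀ j, j ≠ k → F j = 0 := by
        intro j hj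
        have := hF.1 j
        simp only [single, if_neg hj] at this
        exact Multiset.map_eq_zero.mp this
      have hctx : famCtx F = q.1 := by
        simp only [famCtx]
        rw [Finset.sum_eq_single k]
        · rw [hq]; simp
        · intro j _ hj; rw [hz j hj]; simp
        · simp
      have hm : famM F = q.2.2 := by
        simp only [famM]
        rw [Finset.sum_eq_single k]
        · rw [hq]; simp
        · intro j _ hj; rw [hz j hj]; simp
        · simp
      have := hF.2 k q (by rw [hq]; simp)
      rw [hq21] at this
      show Der i (famCtx F) (σ k) α (0 + famM F)
      rw [hctx, hm, Nat.zero_add]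
      exact this
  | @lam m Γ a M α p hM ih =>
      intro n' σ F hF
      set σ' : Fin (m + 1) → Tm (n' + 1) := fun k =>
        Fin.cases (motive := fun _ => Tm (n' + 1)) (.var 0)
          (fun j => (σ j).rename Fin.succ) k with hσ'
      set F' : Fin (m + 1) → Multiset ((Fin (n' + 1) → Multiset D) × D × ℕ) :=
        Fin.cons (a.map fun β => ((single (0 : Fin (n' + 1)) β), β, 0))
          (fun j => (F j).map fun q => (Fin.cons 0 q.1, q.2.1, q.2.2)) with hF'
      have hgood : GoodFam i σ' (Fin.cons a Γ) F' := by
        constructor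
        · intro k
          induction k using Fin.cases with
          | zero => simp [hF', Multiset.map_map]
          | succ j =>
              simp only [hF', Fin.cons_succ, Multiset.map_map]
              have := hF.1 j
              simpa using this
        · intro k q hqmem
          induction k using Fin.cases with
          | zero =>
              simp only [hF', Fin.cons_zero, Multiset.mem_map] at hqmem
              obtain ⟨β, hβ, rfl⟩ := hqmem
              exact Der.var (0 : Fin (n' + 1)) β
          | succ j =>
              simp only [hF', Fin.cons_succ, Multiset.mem_map] at hqmem
              obtain ⟨q', hq', rfl⟩ := hqmem
              have := (hF.2 j q' hq').rename Fin.succ (Fin.succ_injective n')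
              rwa [pushCtx_succ] at this
      have hder := ih σ' F' hgood
      have hctx : famCtx F' = Fin.cons a (famCtx F) := by
        funext j
        rw [famCtx_apply, Fin.sum_univ_succ]
        induction j using Fin.cases with
        | zero =>
            simp [hF', Multiset.map_map, Function.comp_def, single,
              Multiset.sum_map_singleton]
        | succ j' =>
            simp [hF', Multiset.map_map, Function.comp_def, single,
              Fin.succ_ne_zero, famCtx_apply]
      have hm : famM F' = famM F := by
        simp only [famM, hF']
        rw [Fin.sum_univ_succ]
        simp [Multiset.map_map, Function.comp]
      rw [hctx, hm] at hder
      show Der i (famCtx F) (.lam (M.subst σ')) (i (a, α)) (p + famM F)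
      exact Der.lam hder
  | @app m Γ M N α p l hM hN ihM ihN =>
      intro n' σ F hF
      obtain ⟨G, H, hsplit, hG, hH⟩ := goodFam_split hF
      have hMd := ihM σ G hG
      obtain ⟨l', h1, h2, h3, h4⟩ := listFam l (fun q hq => ihN q hq σ) H hH
      have happ := Der.app (i := i) l' (by rw [h1]; exact hMd) h4
      rw [h2, h3] at happ
      have hctx : famCtx G + famCtx H = famCtx F := (famCtx_split hsplit).symm
      have hm : famM F = famM G + famM H := famM_split hsplit
      rw [hctx] at happ
      have : p + famM G + ((l.map fun q => q.2.2).sum + famM H) + 1 =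
          p + (l.map fun q => q.2.2).sum + 1 + famM F := by omega
      rwa [this] at happ

end SubstLemma

section Main
variable {D : Type}

lemma botFree_rename : ∀ {n m : ℕ} (ρ : Fin n → Fin m) (M : Tm n),
    BotFree M → BotFree (M.rename ρ)
  | _, _, _, .var _, _ => trivial
  | _, _, ρ, .lam M, h => botFree_rename _ M h
  | _, _, ρ, .app M N, h => ⟨botFree_rename ρ M h.1, botFree_rename ρ N h.2⟩
  | _, _, _, .bot, h => h.elim

lemma botFree_subst : ∀ {n : ℕ} (M : Tm n) {m : ℕ} (σ : Fin n → Tm m),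
    (∀ k, BotFree (σ k)) → BotFree M → BotFree (M.subst σ) := by
  intro n M
  induction M with
  | var k => intro m σ hσ _; exact hσ k
  | lam M ih =>
      intro m σ hσ h
      refine ih _ ?_ h
      intro k
      induction k using Fin.cases with
      | zero => rw [Fin.cases_zero]; trivial
      | succ j => rw [Fin.cases_succ]; exact botFree_rename _ _ (hσ j)
  | app M N ihM ihN => intro m σ hσ h; exact ⟨ihM σ hσ h.1, ihN σ hσ h.2⟩
  | bot => intro m σ hσ h; exact h.elim

lemma botFree_subst1 {n : ℕ} {M : Tm (n + 1)} {N : Tm n}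
    (hM : BotFree M) (hN : BotFree N) : BotFree (M.subst1 N) := by
  refine botFree_subst M _ ?_ hM
  intro k
  induction k using Fin.cases with
  | zero => rw [Fin.cases_zero]; exact hN
  | succ j => rw [Fin.cases_succ]; trivial

lemma Der.lam_inv {i : Multiset D × D → D} {n : ℕ} {Γ : Fin n → Multiset D}
    {P : Tm (n + 1)} {δ : D} {m : ℕ} (h : Der i Γ (.lam P) δ m) :
    ∃ a α, δ = i (a, α) ∧ Der i (Fin.cons a Γ) P α m := by
  cases h with | lam h => exact ⟨_, _, rfl, h⟩

/-- Single substitution lemma: a redex can be typed from typings of its parts. -/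
lemma Der.subst1' {i : Multiset D × D → D} {n : ℕ} {Γ : Fin n → Multiset D}
    {P : Tm (n + 1)} {N : Tm n} {α : D} {p : ℕ}
    (l : List ((Fin n → Multiset D) × D × ℕ))
    (hP : Der i (Fin.cons (↑(l.map fun q => q.2.1)) Γ) P α p)
    (hN : ∀ q ∈ l, Der i q.1 N q.2.1 q.2.2) :
    Der i (Γ + (l.map Prod.fst).sum) (P.subst1 N) α (p + (l.map fun q => q.2.2).sum) := by
  set σ : Fin (n + 1) → Tm n :=
    Fin.cases (motive := fun _ => Tm n) N Tm.var with hσ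
  set F : Fin (n + 1) → Multiset ((Fin n → Multiset D) × D × ℕ) :=
    Fin.cons (↑l) (fun j => (Γ j).map fun β => (single j β, β, 0)) with hF
  have hgood : GoodFam i σ (Fin.cons (↑(l.map fun q => q.2.1)) Γ) F := by
    constructor
    · intro k
      induction k using Fin.cases with
      | zero => simp [hF, Multiset.map_coe]
      | succ j => simp [hF, Multiset.map_map, Function.comp]
    · intro k q hq
      induction k using Fin.cases with
      | zero =>
          simp only [hF, Fin.cons_zero, Multiset.mem_coe] at hq
          have h0 : σ 0 = N := by rw [hσ]; simp
          rw [h0]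
          exact hN q hq
      | succ j =>
          simp only [hF, Fin.cons_succ, Multiset.mem_map] at hq
          obtain ⟨β, hβ, rfl⟩ := hq
          have hs : σ j.succ = Tm.var j := by rw [hσ]; simp
          rw [hs]
          exact Der.var j β
  have hder := hP.subst σ F hgood
  have hctx : famCtx F = Γ + (l.map Prod.fst).sum := by
    funext j'
    rw [famCtx_apply, Fin.sum_univ_succ]
    simp only [hF, Fin.cons_zero, Fin.cons_succ, Multiset.map_map, Function.comp]
    have h1 : ((↑l : Multiset ((Fin n → Multiset D) × D × ℕ)).map fun q => q.1 j').sum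
        = ((l.map Prod.fst).sum) j' := by
      rw [Multiset.map_coe, Multiset.sum_coe]
      have := msum_apply (↑(l.map Prod.fst) : Multiset (Fin n → Multiset D)) j'
      rw [Multiset.sum_coe, Multiset.map_coe, List.map_map] at this
      rw [this]
      rfl
    have h2 : ∑ k : Fin n, ((Γ k).map fun β => single k β j').sum = Γ j' := by
      rw [Finset.sum_eq_single j']
      · simp [single, Multiset.sum_map_singleton]
      · intro k _ hk
        have : ∀ β : D, single k β j' = 0 := by
          intro β; simp [single, Ne.symm hk]
        simp [this]
      · simp
    rw [h1, h2, Pi.add_apply, add_comm]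
  have hm : famM F = (l.map fun q => q.2.2).sum := by
    simp only [famM, hF]
    rw [Fin.sum_univ_succ]
    simp only [Fin.cons_zero, Fin.cons_succ, Multiset.map_map, Function.comp]
    rw [Multiset.map_coe, Multiset.sum_coe]
    simp
  rw [hctx, hm] at hder
  exact hder

/-- Weighted subject reduction for a head step: a typed, bot-free term is either a
head normal form or makes a β-step to a typed term with strictly smaller measure. -/
lemma derStep {i : Multiset D × D → D} (hi : Function.Injective i) :
    ∀ {n : ℕ} {Γ : Fin n → Multiset D} {M : Tm n} {α : D} {m : ℕ},
      Der i Γ M α m → BotFree M →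
      IsHnf M ∨ ∃ M' m', Beta M M' ∧ BotFree M' ∧ Der i Γ M' α m' ∧ m' < m := by
  intro n Γ M α m h
  induction h with
  | var k α => intro _; exact Or.inl (IsHnf.head (IsHead.var k))
  | lam hM ih =>
      intro hbf
      rcases ih hbf with hnf | ⟨M', m', hb, hbf', hd', hlt⟩
      · exact Or.inl (IsHnf.lam hnf)
      · exact Or.inr ⟨.lam M', m', Beta.lam hb, hbf', Der.lam hd', hlt⟩
  | @app n Γ M N α p l hM hN ihM ihN =>
      intro hbf
      cases M with
      | var k => exact Or.inl (IsHnf.head (IsHead.app (IsHead.var k)))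
      | bot => exact hbf.1.elim
      | lam P =>
          obtain ⟨a, α', heq, hP⟩ := hM.lam_inv
          obtain ⟨ha, hα⟩ : (↑(l.map fun q => q.2.1) : Multiset D) = a ∧ α = α' := by
            have := hi heq
            exact ⟨congrArg Prod.fst this, congrArg Prod.snd this⟩
          subst hα
          rw [← ha] at hP
          have hd := Der.subst1' l hP hN
          refine Or.inr ⟨P.subst1 N, _, Beta.redex P N,
            botFree_subst1 hbf.1 hbf.2, hd, ?_⟩
          omega
      | app M₁ M₂ =>
          rcases ihM hbf.1 with hnf | ⟨M', m', hb, hbf', hd', hlt⟩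
          · cases hnf with
            | head hh => exact Or.inl (IsHnf.head (IsHead.app hh))
          · refine Or.inr ⟨.app M' N, _, Beta.appL hb, ⟨hbf', hbf.2⟩,
              Der.app l hd' hN, ?_⟩
            omega

/-- A typed bot-free term head-reduces to a head normal form. -/
lemma derReach {i : Multiset D × D → D} (hi : Function.Injective i) :
    ∀ (m : ℕ) {n : ℕ} {Γ : Fin n → Multiset D} {M : Tm n} {α : D},
      Der i Γ M α m → BotFree M →
      ∃ N, Relation.ReflTransGen (fun a b => Beta a b) M N ∧ BotFree N ∧ IsHnf N := by
  intro m
  induction m using Nat.strong_induction_on with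
  | _ m ih =>
      intro n Γ M α hd hbf
      rcases derStep hi hd hbf with hnf | ⟨M', m', hb, hbf', hd', hlt⟩
      · exact ⟨M, Relation.ReflTransGen.refl, hbf, hnf⟩
      · obtain ⟨N, hr, h1, h2⟩ := ih m' hlt hd' hbf'
        exact ⟨N, Relation.ReflTransGen.head hb hr, h1, h2⟩

end Main

lemma rtg_eqvGen {n : ℕ} {A B : Tm n}
    (h : Relation.ReflTransGen (fun a b : Tm n => Beta a b) A B) :
    Relation.EqvGen (fun a b : Tm n => Beta a b) A B := by
  induction h with
  | refl => exact Relation.EqvGen.refl _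
  | tail _ hs ih => exact Relation.EqvGen.trans _ _ _ ih (Relation.EqvGen.rel _ _ hs)

/-- Sensibility of relational graph models: an unsolvable λ-term (one with no head
normal form) has empty interpretation — no typing judgment for it is derivable. -/
theorem stmt_14 {D : Type} [Infinite D] (i : Multiset D × D → D)
    (hi : Function.Injective i) {n : ℕ} (M : Tm n) (hM : BotFree M)
    (huns : ¬ ∃ N : Tm n, BotFree N ∧
      Relation.EqvGen (fun a b : Tm n => Beta a b) M N ∧ IsHnf N) :
    ∀ (Γ : Fin n → Multiset D) (α : D) (m : ℕ), ¬ Der i Γ M α m := by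

  intro Γ α m hd
  apply huns
  obtain ⟨N, hr, h1, h2⟩ := derReach hi m hd hM
  exact ⟨N, h1, rtg_eqvGen hr, h2⟩
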